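/- arXiv:2311.00222 — 2 statements merged into one kernel-verified Lean document; each statement's English description precedes it below -/
import Mathlib

section
/- Suppose n ≥ 2, for each task q there is a unique dominating agent i* q (i.e., f (i* q) q > f j q for every agent j ≠ i* q), and the step sizes are large enough that γ i q * δ > 1 for all i, q, where δ = min_q (f (i* q) q − max_{j ≠ i* q} f j q) > 0. Let W̄ be the matrix with W̄ i q = 1 if i = i* q and W̄ i q = 0 otherwise. Then every PBRAG trajectory W satisfies W t i q = W̄ i q for all agents i, all tasks q, and all t ≥ 2. -/
open Finset Filter

noncomputable def fsMax (s : Finset ℝ) : ℝ := s.max.unbotD 0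

noncomputable def fsMin (s : Finset ℝ) : ℝ := s.min.untopD 0

noncomputable def fsSubmax (s : Finset ℝ) : ℝ := fsMax (s.filter (fun x => x < fsMax s))

/-- Agent `i` is dominating for task `q`. -/
def Dominating {n m : ℕ} (f : Fin n → Fin m → ℝ) (i : Fin n) (q : Fin m) : Prop :=
  ∀ j, f j q ≤ f i q

/-- Maximum of `g j` over all `j ≠ i` (0 if that set is empty). -/
noncomputable def maxErase {n : ℕ} (i : Fin n) (g : Fin n → ℝ) : ℝ :=
  fsMax ((Finset.univ.erase i).image g)

/-- Utility of agent `i` in the weight game. -/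
noncomputable def Uutil {n m : ℕ} (f : Fin n → Fin m → ℝ) (w : Fin n → Fin m → ℝ)
    (i : Fin n) : ℝ :=
  ∑ q, (f i q * w i q - maxErase i (fun j => f j q * w j q) * w i q)

/-- All entries of the matrix lie in `[0,1]`. -/
def InUnit {n m : ℕ} (w : Fin n → Fin m → ℝ) : Prop :=
  ∀ i q, w i q ∈ Set.Icc (0 : ℝ) 1

/-- Nash equilibrium of the weight game. -/
def IsNashW {n m : ℕ} (f : Fin n → Fin m → ℝ) (w : Fin n → Fin m → ℝ) : Prop :=
  ∀ i, ∀ w' : Fin m → ℝ, (∀ q, w' q ∈ Set.Icc (0 : ℝ) 1) →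
    Uutil f (Function.update w i w') i ≤ Uutil f w i


lemma le_fsMax {s : Finset ℝ} {x : ℝ} (hx : x ∈ s) : x ≤ fsMax s := by
  have h := Finset.le_max hx
  unfold fsMax
  cases hmax : s.max with
  | bot => simp [hmax] at h
  | coe y => rw [hmax] at h; simpa using h

lemma fsMax_le {s : Finset ℝ} {b : ℝ} (hb : 0 ≤ b) (h : ∀ y ∈ s, y ≤ b) :
    fsMax s ≤ b := by
  unfold fsMax
  cases hmax : s.max with
  | bot => simpa using hb
  | coe y =>
    have hy : y ∈ s := Finset.mem_of_max hmax
    simpa using h y hy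

lemma fsMin_le {s : Finset ℝ} {x : ℝ} (hx : x ∈ s) : fsMin s ≤ x := by
  have h := Finset.min_le hx
  unfold fsMin
  cases hmin : s.min with
  | top => simp [hmin] at h
  | coe y => rw [hmin] at h; simpa using h

lemma le_maxErase {n : ℕ} {i j : Fin n} (hj : j ≠ i) (g : Fin n → ℝ) :
    g j ≤ maxErase i g := by
  apply le_fsMax
  exact Finset.mem_image_of_mem g (Finset.mem_erase.mpr ⟨hj, Finset.mem_univ j⟩)

lemma maxErase_le {n : ℕ} {i : Fin n} {g : Fin n → ℝ} {b : ℝ} (hb : 0 ≤ b)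
    (h : ∀ j, j ≠ i → g j ≤ b) : maxErase i g ≤ b := by
  apply fsMax_le hb
  intro y hy
  obtain ⟨j, hj, rfl⟩ := Finset.mem_image.mp hy
  exact h j (Finset.mem_erase.mp hj).1

noncomputable def clamp (x : ℝ) : ℝ := max 0 (min x 1)

lemma clamp_eq_one {x : ℝ} (h : 1 ≤ x) : clamp x = 1 := by
  unfold clamp
  rw [min_eq_right h]
  exact max_eq_right zero_le_one

lemma clamp_eq_zero {x : ℝ} (h : x ≤ 0) : clamp x = 0 := by
  unfold clamp
  rw [min_eq_left (h.trans zero_le_one), max_eq_left h]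

lemma clamp_mem : ∀ x : ℝ, clamp x ∈ Set.Icc (0:ℝ) 1 := by
  intro x
  constructor
  · exact le_max_left _ _
  · exact max_le (zero_le_one) (min_le_right _ _)

/-- One step of the projected best-response ascending gradient dynamics. -/
noncomputable def pbrag {n m : ℕ} (f γ : Fin n → Fin m → ℝ)
    (w : Fin n → Fin m → ℝ) : Fin n → Fin m → ℝ :=
  fun i q => clamp (w i q + γ i q * (f i q - maxErase i (fun j => f j q * w j q)))

theorem pbrag_two_step_convergence {n m : ℕ} (hn : 2 ≤ n) (f : Fin n → Fin m → ℝ)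
    (hf : ∀ i q, 0 ≤ f i q)
    (istar : Fin m → Fin n)
    (hstar : ∀ q, ∀ j, j ≠ istar q → f j q < f (istar q) q)
    (γ : Fin n → Fin m → ℝ) (hγ : ∀ i q, 0 < γ i q)
    (δ : ℝ)
    (hδ : δ = fsMin (Finset.univ.image
      (fun q => f (istar q) q - maxErase (istar q) (fun j => f j q))))
    (hδpos : 0 < δ)
    (hlarge : ∀ i q, 1 < γ i q * δ)
    (W : ℕ → Fin n → Fin m → ℝ)
    (hW0 : InUnit (W 0)) (hWs : ∀ t, W (t + 1) = pbrag f γ (W t)) :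
    ∀ (i : Fin n) (q : Fin m) (t : ℕ), 2 ≤ t →
      W t i q = if i = istar q then 1 else 0 := by
 
  -- preliminaries
  have hexists : ∀ i : Fin n, ∃ j : Fin n, j ≠ i := by
    intro i
    have : 1 < Fintype.card (Fin n) := by rw [Fintype.card_fin]; omega
    exact Fintype.exists_ne_of_one_lt_card this i
  have hInUnit : ∀ t, InUnit (W t) := by
    intro t
    induction t with
    | zero => exact hW0
    | succ t ih =>
      intro i q
      rw [hWs t]
      exact clamp_mem _
  -- δ bound for each q
  have hδle : ∀ q : Fin m, δ ≤ f (istar q) q - maxErase (istar q) (fun j => f j q) := by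
    intro q
    rw [hδ]
    exact fsMin_le (Finset.mem_image_of_mem _ (Finset.mem_univ q))
  -- step 2: W (t+1) (istar q) q = 1
  have hstep1 : ∀ t q, W (t + 1) (istar q) q = 1 := by
    intro t q
    rw [hWs t]
    unfold pbrag
    apply clamp_eq_one
    set i := istar q
    obtain ⟨j0, hj0⟩ := hexists i
    have hM0 : (0:ℝ) ≤ maxErase i (fun j => f j q) :=
      le_trans (hf j0 q) (le_maxErase hj0 (fun j => f j q))
    have hA : maxErase i (fun j => f j q * W t j q) ≤ maxErase i (fun j => f j q) := by
      apply maxErase_le hM0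
      intro j hj
      calc f j q * W t j q ≤ f j q * 1 :=
            mul_le_mul_of_nonneg_left (hInUnit t j q).2 (hf j q)
        _ = f j q := mul_one _
        _ ≤ maxErase i (fun j => f j q) := le_maxErase hj (fun j => f j q)
    have h1 : δ ≤ f i q - maxErase i (fun j => f j q * W t j q) :=
      le_trans (hδle q) (by linarith)
    have h2 : γ i q * δ ≤ γ i q * (f i q - maxErase i (fun j => f j q * W t j q)) :=
      mul_le_mul_of_nonneg_left h1 (hγ i q).le
    have h3 := hlarge i q
    have h4 := (hInUnit t i q).1
    linarith
  -- step 3: for i ≠ istar q, W (t+2) i q = 0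
  have hstep2 : ∀ t q i, i ≠ istar q → W (t + 2) i q = 0 := by
    intro t q i hi
    have : t + 2 = (t + 1) + 1 := rfl
    rw [this, hWs (t+1)]
    unfold pbrag
    apply clamp_eq_zero
    have hA : f (istar q) q ≤ maxErase i (fun j => f j q * W (t+1) j q) := by
      have := le_maxErase (Ne.symm hi) (fun j => f j q * W (t+1) j q)
      simpa [hstep1 t q] using this
    have hMfi : f i q ≤ maxErase (istar q) (fun j => f j q) := le_maxErase hi (fun j => f j q)
    have hδ2 : δ ≤ f (istar q) q - f i q := le_trans (hδle q) (by linarith)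
    have h1 : f i q - maxErase i (fun j => f j q * W (t+1) j q) ≤ -δ := by linarith
    have h2 : γ i q * (f i q - maxErase i (fun j => f j q * W (t+1) j q)) ≤ γ i q * (-δ) :=
      mul_le_mul_of_nonneg_left h1 (hγ i q).le
    have h3 := hlarge i q
    have h4 := (hInUnit (t+1) i q).2
    nlinarith
  intro i q t ht
  obtain ⟨s, rfl⟩ : ∃ s, t = s + 2 := ⟨t - 2, by omega⟩
  by_cases h : i = istar q
  · subst h
    simp [hstep1 (s+1) q]
  · simp [h, hstep2 s q i h]
end

section
/- Let E be a directed graph on Fin n with diameter bound d ≥ 1, let v : Fin n → ℝ, and let M : ℕ → Fin n → ℝ satisfy M 0 i = v i and M (t+1) i = max_{j ∈ N̄ i} M t j for all t and i. Then for all t ≥ d and all nodes i, M t i = max_j v j. -/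
open Finset Filter

open Classical in
/-- Closed in-neighborhood of node `i`. -/
noncomputable def nbhd {n : ℕ} (E : Fin n → Fin n → Prop) (i : Fin n) : Finset (Fin n) :=
  insert i (Finset.univ.filter (fun j => E j i))

/-- `d` is a diameter bound for the directed graph `E`. -/
def IsDiamBound {n : ℕ} (E : Fin n → Fin n → Prop) (d : ℕ) : Prop :=
  ∀ j i : Fin n, ∃ p ≤ d, ∃ c : ℕ → Fin n,
    c 0 = j ∧ c p = i ∧ ∀ k < p, E (c k) (c (k + 1))

lemma fsMax_eq_max' (s : Finset ℝ) (h : s.Nonempty) : fsMax s = s.max' h := by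
  unfold fsMax
  rw [← Finset.coe_max' h]
  rfl

lemma fsMax_mem {s : Finset ℝ} (h : s.Nonempty) : fsMax s ∈ s := by
  rw [fsMax_eq_max' s h]; exact s.max'_mem h

lemma self_mem_nbhd {n : ℕ} (E : Fin n → Fin n → Prop) (i : Fin n) : i ∈ nbhd E i := by
  simp [nbhd]

lemma mem_nbhd_of_E {n : ℕ} {E : Fin n → Fin n → Prop} {j i : Fin n} (h : E j i) :
    j ∈ nbhd E i := by
  classical
  simp [nbhd, h]

theorem max_consensus {n : ℕ} (hn : 1 ≤ n) (E : Fin n → Fin n → Prop)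
    (d : ℕ) (hd : 1 ≤ d) (hdiam : IsDiamBound E d)
    (v : Fin n → ℝ) (M : ℕ → Fin n → ℝ)
    (hM0 : ∀ i, M 0 i = v i)
    (hMs : ∀ t i, M (t + 1) i = fsMax ((nbhd E i).image (M t))) :
    ∀ t, d ≤ t → ∀ i, M t i = fsMax (Finset.univ.image v) := by
  set V := fsMax (Finset.univ.image v) with hV
  have hstep : ∀ t i j, j ∈ nbhd E i → M t j ≤ M (t + 1) i := by
    intro t i j hj
    rw [hMs]
    exact le_fsMax (Finset.mem_image_of_mem _ hj)
  have hmono : ∀ t i, M t i ≤ M (t + 1) i := fun t i =>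
    hstep t i i (self_mem_nbhd E i)
  have hmono' : ∀ a b i, a ≤ b → M a i ≤ M b i := by
    intro a b i hab
    induction b with
    | zero => simp_all
    | succ b ih =>
      rcases Nat.lt_or_ge a (b + 1) with h | h
      · exact le_trans (ih (Nat.lt_succ_iff.mp h)) (hmono b i)
      · have : a = b + 1 := le_antisymm hab h
        simp [this]
  have hupper : ∀ t i, M t i ≤ V := by
    intro t
    induction t with
    | zero =>
      intro i
      rw [hM0]
      exact le_fsMax (Finset.mem_image_of_mem _ (Finset.mem_univ i))
    | succ t ih =>
      intro i
      rw [hMs]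
      have hne : ((nbhd E i).image (M t)).Nonempty :=
        ⟨M t i, Finset.mem_image_of_mem _ (self_mem_nbhd E i)⟩
      obtain ⟨j, _, hj⟩ := Finset.mem_image.mp (fsMax_mem hne)
      rw [← hj]
      exact ih j
  intro t ht i
  refine le_antisymm (hupper t i) ?_
  -- lower bound
  have hVmem : V ∈ Finset.univ.image v := by
    apply fsMax_mem
    exact ⟨v ⟨0, hn⟩, Finset.mem_image_of_mem _ (Finset.mem_univ _)⟩
  obtain ⟨j, _, hjV⟩ := Finset.mem_image.mp hVmem
  obtain ⟨p, hp, c, hc0, hcp, hcE⟩ := hdiam j i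
  have key : ∀ k ≤ p, V ≤ M k (c k) := by
    intro k
    induction k with
    | zero => intro _; rw [hc0, hM0, hjV]
    | succ k ih =>
      intro hk
      have hk' : k < p := hk
      exact le_trans (ih (le_of_lt hk'))
        (hstep k (c (k + 1)) (c k) (mem_nbhd_of_E (hcE k hk')))
  calc V ≤ M p i := by rw [← hcp]; exact key p le_rfl
    _ ≤ M t i := hmono' p t i (le_trans hp ht)
end
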